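/- Let β = √β_2 be the square root of the golden mean and α = 2 - β_2 = 2 - β². Then with p = (1-α)/β, the upper kneading invariant τ⁺_{β,α}(p) equals the periodic sequence (1,0,0,1,1,0,0,1,...) with period 4, while the lower kneading invariant τ⁻_{β,α}(p) equals (0,1,1,0,1,0,1,0,...), i.e., (0,1) followed by the periodic word (1,0); in particular τ⁺_{β,α}(p) is periodic but τ⁻_{β,α}(p) is pre-periodic and not periodic. -/

import Mathlib

noncomputable def Tplus (β α : ℝ) (x : ℝ) : ℝ :=
  if x < (1 - α) / β then β * x + α else β * x + α - 1

noncomputable def Tminus (β α : ℝ) (x : ℝ) : ℝ :=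
  if x ≤ (1 - α) / β then β * x + α else β * x + α - 1

noncomputable def tauPlus (β α : ℝ) : ℕ → Fin 2 := fun n =>
  if (Tplus β α)^[n] ((1 - α) / β) < (1 - α) / β then 0 else 1

noncomputable def tauMinus (β α : ℝ) : ℕ → Fin 2 := fun n =>
  if (Tminus β α)^[n] ((1 - α) / β) ≤ (1 - α) / β then 0 else 1

def IsPeriodic (ω : ℕ → Fin 2) : Prop := ∃ k : ℕ, 0 < k ∧ ∀ n, ω (n + k) = ω n


private lemma iter2 {X : Type*} (f : X → X) (x : X) : f^[2] x = f (f x) := by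
  rw [show (2:ℕ) = 1 + 1 from rfl, Function.iterate_add_apply, Function.iterate_one]

private lemma iter3 {X : Type*} (f : X → X) (x : X) : f^[3] x = f (f (f x)) := by
  rw [show (3:ℕ) = 1 + 2 from rfl, Function.iterate_add_apply, iter2, Function.iterate_one]

private lemma iter4 {X : Type*} (f : X → X) (x : X) : f^[4] x = f (f (f (f x))) := by
  rw [show (4:ℕ) = 1 + 3 from rfl, Function.iterate_add_apply, iter3, Function.iterate_one]

/-- For `β = √β₂` (square root of the golden mean) and `α = 2 - β₂`, the upper
kneading invariant is `(overline{1,0,0,1})` and the lower kneading invariant is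
`(0,1,overline{1,0})`; in particular the upper one is periodic but the lower
one is not. -/
theorem counterexample_kneading :
    let φ : ℝ := (1 + Real.sqrt 5) / 2
    let β : ℝ := Real.sqrt φ
    let α : ℝ := 2 - φ
    (∀ n, tauPlus β α n = if n % 4 = 0 ∨ n % 4 = 3 then 1 else 0) ∧
      (tauMinus β α 0 = 0 ∧ tauMinus β α 1 = 1 ∧
        ∀ n, 2 ≤ n → tauMinus β α n = if n % 2 = 0 then 1 else 0) ∧
      IsPeriodic (tauPlus β α) ∧ ¬ IsPeriodic (tauMinus β α) := by
  intro φ β α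
  have h5 : Real.sqrt 5 ^ 2 = 5 := Real.sq_sqrt (by norm_num)
  have h5nn : (0:ℝ) ≤ Real.sqrt 5 := Real.sqrt_nonneg 5
  have h5lb : 2 < Real.sqrt 5 := by nlinarith
  have h5ub : Real.sqrt 5 < 3 := by nlinarith
  have hφ1 : (1:ℝ) < φ := by show (1:ℝ) < (1 + Real.sqrt 5) / 2; linarith
  have hφ2 : φ < 2 := by show (1 + Real.sqrt 5) / 2 < 2; linarith
  have hφsq : φ ^ 2 = φ + 1 := by
    show ((1 + Real.sqrt 5) / 2) ^ 2 = (1 + Real.sqrt 5) / 2 + 1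
    nlinarith
  have hβpos : 0 < β := Real.sqrt_pos.mpr (by linarith)
  have hβsq : β ^ 2 = φ := Real.sq_sqrt (by linarith)
  have hβ1 : 1 < β := by nlinarith
  have hβφ : β < φ := by nlinarith
  have hβne : β ≠ 0 := ne_of_gt hβpos
  have hαv : α = 2 - φ := rfl
  have h1α : 1 - α = φ - 1 := by rw [hαv]; ring
  -- the critical point
  have hc1 : ¬ ((1 - α) / β < (1 - α) / β) := lt_irrefl _
  have hc1' : (1 - α) / β ≤ (1 - α) / β := le_refl _
  have hc2 : (0:ℝ) < (1 - α) / β := div_pos (by rw [h1α]; linarith) hβpos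
  have hc3 : α < (1 - α) / β := by
    rw [lt_div_iff₀ hβpos, h1α, hαv]
    nlinarith [mul_pos (sub_pos.mpr hφ2) (sub_pos.mpr hβφ)]
  have hc4 : ¬ (β * α + α < (1 - α) / β) := by
    rw [not_lt, div_le_iff₀ hβpos, h1α, hαv]
    nlinarith [mul_pos (sub_pos.mpr hφ2) (sub_pos.mpr hβφ)]
  have hd1 : ¬ ((1:ℝ) ≤ (1 - α) / β) := by
    rw [not_le, div_lt_iff₀ hβpos, h1α]
    nlinarith [sq_nonneg (β - (φ - 1))]
  have hd2 : ¬ (β + α - 1 ≤ (1 - α) / β) := by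
    rw [not_le, div_lt_iff₀ hβpos, h1α, hαv]
    nlinarith [sq_nonneg (β * (φ - 1) - 1), mul_pos hβpos (sub_pos.mpr hφ1)]
  have hd3 : β * (β + α - 1) + α - 1 ≤ (1 - α) / β := by
    rw [le_div_iff₀ hβpos, h1α, hαv]
    nlinarith
  -- Tplus orbit
  have e1 : Tplus β α ((1 - α) / β) = 0 := by
    rw [Tplus, if_neg hc1]; field_simp; ring
  have e2 : Tplus β α 0 = α := by rw [Tplus, if_pos hc2]; ring
  have e3 : Tplus β α α = β * α + α := by rw [Tplus, if_pos hc3]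
  have e4 : Tplus β α (β * α + α) = (1 - α) / β := by
    rw [Tplus, if_neg hc4, eq_div_iff hβne, hαv]
    linear_combination ((2 - φ) * (β + 1)) * hβsq - (β + 1) * hφsq
  have h4 : (Tplus β α)^[4] ((1 - α) / β) = (1 - α) / β := by
    rw [iter4, e1, e2, e3, e4]
  have hp4 : ∀ k, (Tplus β α)^[4 * k] ((1 - α) / β) = (1 - α) / β := by
    intro k
    induction k with
    | zero => simp
    | succ k ih =>
        rw [Nat.mul_succ, Function.iterate_add_apply, h4, ih]
  have tPchar : ∀ n, tauPlus β α n = if n % 4 = 0 ∨ n % 4 = 3 then 1 else 0 := by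
    intro n
    have key : (Tplus β α)^[n] ((1 - α) / β) = (Tplus β α)^[n % 4] ((1 - α) / β) := by
      conv_lhs => rw [← Nat.div_add_mod n 4, Nat.add_comm, Function.iterate_add_apply, hp4]
    have hm : n % 4 = 0 ∨ n % 4 = 1 ∨ n % 4 = 2 ∨ n % 4 = 3 := by omega
    rcases hm with h | h | h | h <;> simp only [tauPlus]
    · rw [key, h, Function.iterate_zero_apply, if_neg hc1]; norm_num
    · rw [key, h, Function.iterate_one, e1, if_pos hc2]; norm_num
    · rw [key, h, iter2, e1, e2, if_pos hc3]; norm_num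
    · rw [key, h, iter3, e1, e2, e3, if_neg hc4]; norm_num
  -- Tminus orbit
  have m1 : Tminus β α ((1 - α) / β) = 1 := by
    rw [Tminus, if_pos hc1']; field_simp; ring
  have m2 : Tminus β α 1 = β + α - 1 := by
    rw [Tminus, if_neg hd1]; ring
  have m3 : Tminus β α (β + α - 1) = β * (β + α - 1) + α - 1 := by
    rw [Tminus, if_neg hd2]
  have m4 : Tminus β α (β * (β + α - 1) + α - 1) = β + α - 1 := by
    rw [Tminus, if_pos hd3, hαv]
    linear_combination (β + 1 - φ) * hβsq - hφsq
  have hm2 : (Tminus β α)^[2] ((1 - α) / β) = β + α - 1 := by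
    rw [iter2, m1, m2]
  have hq2 : ∀ k, (Tminus β α)^[2 * k] (β + α - 1) = β + α - 1 := by
    intro k
    induction k with
    | zero => simp
    | succ k ih =>
        rw [Nat.mul_succ, Function.iterate_add_apply, iter2, m3, m4, ih]
  have t0 : tauMinus β α 0 = 0 := by
    simp only [tauMinus, Function.iterate_zero_apply, if_pos hc1']; exact if_pos hc1'
  have t1 : tauMinus β α 1 = 1 := by
    simp only [tauMinus, Function.iterate_one, m1, if_neg hd1]
  have tMchar : ∀ n, 2 ≤ n → tauMinus β α n = if n % 2 = 0 then 1 else 0 := by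
    intro n hn
    obtain ⟨m, rfl⟩ : ∃ m, n = m + 2 := ⟨n - 2, by omega⟩
    have key : (Tminus β α)^[m + 2] ((1 - α) / β)
        = (Tminus β α)^[m % 2] (β + α - 1) := by
      rw [Function.iterate_add_apply, hm2]
      conv_lhs => rw [← Nat.div_add_mod m 2, Nat.add_comm, Function.iterate_add_apply, hq2]
    have hm : m % 2 = 0 ∨ m % 2 = 1 := by omega
    rcases hm with h | h <;> simp only [tauMinus]
    · rw [key, h, Function.iterate_zero_apply, if_neg hd2,
        if_pos (by omega : (m + 2) % 2 = 0)]
    · rw [key, h, Function.iterate_one, m3, if_pos hd3,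
        if_neg (by omega : ¬ (m + 2) % 2 = 0)]
  refine ⟨tPchar, ⟨t0, t1, tMchar⟩, ⟨4, by norm_num, fun n => ?_⟩, ?_⟩
  · rw [tPchar, tPchar, Nat.add_mod_right]
  · rintro ⟨k, hk, hper⟩
    have hk0 : tauMinus β α k = 0 := by rw [← t0]; simpa using hper 0
    rcases eq_or_lt_of_le (Nat.succ_le_of_lt hk) with h1 | h2
    · rw [← h1] at hk0; rw [t1] at hk0; exact absurd hk0 (by decide)
    · have hk2 : 2 ≤ k := h2
      have hodd : k % 2 = 1 := by
        by_contra h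
        rw [tMchar k hk2, if_pos (by omega)] at hk0
        exact absurd hk0 (by decide)
      have h2k : tauMinus β α (2 + k) = 1 := by
        rw [show 2 + k = k + 2 by ring] at *
        have := hper 2
        rw [show 2 + k = k + 2 by ring] at this
        rw [this, tMchar 2 le_rfl]; norm_num
      rw [tMchar (2 + k) (by omega), if_neg (by omega)] at h2k
      exact absurd h2k (by decide)
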